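/- Let q > d ≥ 1, L > 0, C > 0. There exists a constant c = c(q, d, L, C) > 0 with the following property: if m : 𝕋^d → (0,∞) is Lipschitz with Lipschitz constant L, attains its minimum value m̄ = min m > 0, and satisfies ∫_{𝕋^d} m^{-q} dx ≤ C, then m̄ ≥ c. -/

import Mathlib

open MeasureTheory

/-- Quantitative positivity: a Lipschitz positive function on the torus with
∫ m^{-q} ≤ C (q > d) has a minimum bounded below by a constant c(q,d,L,C) > 0. -/
theorem stmt_10 (d : ℕ) (q L C : ℝ) (hd : 1 ≤ d) (hq : (d : ℝ) < q)
    (hL : 0 < L) (hC : 0 < C) :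
    ∃ c : ℝ, 0 < c ∧
      ∀ (m : (Fin d → AddCircle (1:ℝ)) → ℝ) (mbar : ℝ),
        (∀ x y, |m x - m y| ≤ L * dist x y) →
        (∀ x, mbar ≤ m x) → (∃ x₀, m x₀ = mbar) → 0 < mbar →
        (∫⁻ x, ENNReal.ofReal (m x ^ (-q)) ≤ ENNReal.ofReal C) →
        c ≤ mbar := by
  have hqd : (0:ℝ) < q - d := by linarith
  set c₀ : ℝ := ((C * L ^ d)⁻¹) ^ (1 / (q - (d:ℝ))) with hc₀
  have hc₀pos : 0 < c₀ := Real.rpow_pos_of_pos (by positivity) _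
  refine ⟨min (L / 2) (c₀ / 2), lt_min (by positivity) (by positivity), ?_⟩
  rintro m mbar hLip hmin ⟨x₀, hx₀⟩ hmbar hint
  by_cases hcase : L / 2 ≤ mbar
  · exact le_trans (min_le_left _ _) hcase
  push_neg at hcase
  set r : ℝ := mbar / L with hr
  have hrpos : 0 < r := by positivity
  have h2r : 2 * r < 1 := by
    rw [hr, mul_div_assoc', div_lt_one hL]; linarith
  have hub : ∀ x ∈ Metric.closedBall x₀ r, m x ≤ 2 * mbar := by
    intro x hx
    have h1 : m x - m x₀ ≤ L * dist x x₀ := le_trans (le_abs_self _) (hLip x x₀)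
    have h2 : dist x x₀ ≤ r := hx
    have h3 : L * dist x x₀ ≤ L * r := by
      exact mul_le_mul_of_nonneg_left h2 hL.le
    have h4 : L * r = mbar := by rw [hr, mul_div_assoc', mul_comm, mul_div_assoc, div_self hL.ne', mul_one]
    rw [hx₀] at h1
    linarith
  have hKpos : (0:ℝ) < 2 * mbar := by linarith
  -- lower bound on the integral
  have key : ENNReal.ofReal ((2 * mbar) ^ (-q)) * volume (Metric.closedBall x₀ r)
      ≤ ENNReal.ofReal C := by
    refine le_trans ?_ hint
    rw [← lintegral_indicator_const (measurableSet_closedBall)]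
    apply lintegral_mono
    intro x
    by_cases hx : x ∈ Metric.closedBall x₀ r
    · rw [Set.indicator_of_mem hx]
      apply ENNReal.ofReal_le_ofReal
      have hmx : 0 < m x := lt_of_lt_of_le hmbar (hmin x)
      rw [Real.rpow_neg hKpos.le, Real.rpow_neg hmx.le]
      have h5 : m x ^ q ≤ (2 * mbar) ^ q :=
        Real.rpow_le_rpow hmx.le (hub x hx) (by linarith)
      exact inv_anti₀ (Real.rpow_pos_of_pos hmx q) h5
    · rw [Set.indicator_of_notMem hx]; exact zero_le
  -- compute the volume of the ball
  have hvol : volume (Metric.closedBall x₀ r) = ENNReal.ofReal ((2 * r) ^ d) := by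
    rw [closedBall_pi _ hrpos.le, volume_pi_pi]
    simp only [AddCircle.volume_closedBall, min_eq_right h2r.le]
    rw [Finset.prod_const, Finset.card_univ, Fintype.card_fin,
      ← ENNReal.ofReal_pow (by linarith)]
  rw [hvol, ← ENNReal.ofReal_mul (by positivity)] at key
  have hreal : (2 * mbar) ^ (-q) * (2 * r) ^ d ≤ C :=
    (ENNReal.ofReal_le_ofReal_iff hC.le).mp key
  -- algebra
  have h2rK : 2 * r = (2 * mbar) / L := by rw [hr]; ring
  have hpow : (2 * mbar) ^ (-q) * (2 * r) ^ d = (2 * mbar) ^ ((d:ℝ) - q) / L ^ d := by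
    rw [h2rK, div_pow, ← Real.rpow_natCast (2 * mbar) d, mul_div_assoc',
      ← Real.rpow_add hKpos]
    ring_nf
  rw [hpow, div_le_iff₀ (by positivity)] at hreal
  have hneg : (2 * mbar) ^ ((d:ℝ) - q) = ((2 * mbar) ^ (q - (d:ℝ)))⁻¹ := by
    rw [← Real.rpow_neg hKpos.le]; ring_nf
  rw [hneg] at hreal
  have hinv : (C * L ^ d)⁻¹ ≤ (2 * mbar) ^ (q - (d:ℝ)) := by
    have := inv_anti₀ (by positivity : 0 < ((2 * mbar) ^ (q - (d:ℝ)))⁻¹) hreal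
    rwa [inv_inv] at this
  have hfinal : c₀ ≤ 2 * mbar := by
    have := Real.rpow_le_rpow (by positivity) hinv (by positivity : (0:ℝ) ≤ 1 / (q - (d:ℝ)))
    rwa [← Real.rpow_mul hKpos.le, mul_one_div, div_self hqd.ne',
      Real.rpow_one] at this
  calc min (L / 2) (c₀ / 2) ≤ c₀ / 2 := min_le_right _ _
    _ ≤ mbar := by linarith
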